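/- Let $t \geq 2$ and let $\gamma_1, \ldots, \gamma_t$ be elements of $\mathrm{GL}(V)$ for a finite-dimensional real normed vector space $V$, generating a group $\Gamma$ that is $\varepsilon$-Schottky on $\mathbb{P}(V)$: with $E = \{\gamma_1^{\pm 1}, \ldots, \gamma_t^{\pm 1}\}$, every $h \in E$ is $\varepsilon$-proximal, and for all $h, h' \in E$ with $h' \neq h^{-1}$, $\delta(x_h^+, X_{h'}^<) \geq 6\varepsilon$. Then $\Gamma$ is a free group on the generators $\gamma_1, \ldots, \gamma_t$ and is discrete in $\mathrm{GL}(V)$. -/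

import Mathlib

open Filter Topology

variable {V : Type*} [NormedAddCommGroup V] [NormedSpace ℝ V]

/-- The distance between two lines (points of `ℙ(V)`), viewed as submodules:
`d(x₁, x₂) = inf {‖v₁ - v₂‖ : vᵢ ∈ xᵢ, ‖vᵢ‖ = 1}`. -/
noncomputable def projDist (x₁ x₂ : Submodule ℝ V) : ℝ :=
  sInf {r : ℝ | ∃ v₁ ∈ x₁, ∃ v₂ ∈ x₂, ‖v₁‖ = 1 ∧ ‖v₂‖ = 1 ∧ r = ‖v₁ - v₂‖}

/-- The distance `δ(x, ℙ(W))` from a line `x` to the projectivization of a subspace `W`. -/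
noncomputable def projDelta (x W : Submodule ℝ V) : ℝ :=
  sInf {r : ℝ | ∃ y : Submodule ℝ V, y ≤ W ∧ Module.finrank ℝ y = 1 ∧ r = projDist x y}

/-- The spectral radius of an endomorphism, via Gelfand's formula; in finite dimension
this is the maximal modulus `λ₁(g)` of the complex eigenvalues of `g`. -/
noncomputable def specRad (g : V →L[ℝ] V) : ℝ :=
  Filter.limsup (fun n : ℕ => ‖g ^ n‖ ^ ((1 : ℝ) / n)) Filter.atTop

/-- `g` is proximal with top (real) eigenvalue `α`, attracting eigenvector `v`, and
invariant complementary hyperplane `W` on which the spectral radius is `< |α|`; this says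
exactly that `α` is the unique eigenvalue of maximal modulus and has multiplicity one. -/
def IsProximalWith (g : V →L[ℝ] V) (α : ℝ) (v : V) (W : Submodule ℝ V) : Prop :=
  v ≠ 0 ∧ g v = α • v ∧ IsCompl (Submodule.span ℝ {v}) W ∧
  ∃ gW : W →L[ℝ] W, (∀ w : W, g (w : V) = (gW w : V)) ∧ specRad gW < |α|

/-- `g` is `ε`-proximal with data `(α, v, W)`: it is proximal, `δ(x_g⁺, X_g^<) ≥ 2ε`,
`g` maps `B_g^ε` into `b_g^ε`, and `g` is `ε`-Lipschitz on `B_g^ε` (in `ℙ(V)`). -/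
def IsEpsProximalWith (g : V →L[ℝ] V) (ε α : ℝ) (v : V) (W : Submodule ℝ V) : Prop :=
  IsProximalWith g α v W ∧ 2 * ε ≤ projDelta (Submodule.span ℝ {v}) W ∧
  (∀ x : Submodule ℝ V, Module.finrank ℝ x = 1 → ε ≤ projDelta x W →
    Submodule.map (g : V →ₗ[ℝ] V) x ≠ ⊥ ∧
      projDist (Submodule.map (g : V →ₗ[ℝ] V) x) (Submodule.span ℝ {v}) ≤ ε) ∧
  (∀ x y : Submodule ℝ V, Module.finrank ℝ x = 1 → Module.finrank ℝ y = 1 →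
    ε ≤ projDelta x W → ε ≤ projDelta y W →
    projDist (Submodule.map (g : V →ₗ[ℝ] V) x) (Submodule.map (g : V →ₗ[ℝ] V) y) ≤
      ε * projDist x y)

/-- `g` is `ε`-proximal. -/
def IsEpsProximal (g : V →L[ℝ] V) (ε : ℝ) : Prop :=
  ∃ α v W, IsEpsProximalWith g ε α v W


namespace Aux

lemma projDist_set_nonneg (x y : Submodule ℝ V) :
    ∀ r ∈ {r : ℝ | ∃ v₁ ∈ x, ∃ v₂ ∈ y, ‖v₁‖ = 1 ∧ ‖v₂‖ = 1 ∧ r = ‖v₁ - v₂‖}, 0 ≤ r := by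
  rintro r ⟨v₁, h₁, v₂, h₂, n₁, n₂, rfl⟩; positivity

lemma projDist_bddBelow (x y : Submodule ℝ V) :
    BddBelow {r : ℝ | ∃ v₁ ∈ x, ∃ v₂ ∈ y, ‖v₁‖ = 1 ∧ ‖v₂‖ = 1 ∧ r = ‖v₁ - v₂‖} :=
  ⟨0, projDist_set_nonneg x y⟩

lemma projDist_nonneg (x y : Submodule ℝ V) : 0 ≤ projDist x y :=
  Real.sInf_nonneg (projDist_set_nonneg x y)

lemma projDist_le {x y : Submodule ℝ V} {v₁ v₂ : V} (h₁ : v₁ ∈ x) (h₂ : v₂ ∈ y)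
    (n₁ : ‖v₁‖ = 1) (n₂ : ‖v₂‖ = 1) : projDist x y ≤ ‖v₁ - v₂‖ :=
  csInf_le (projDist_bddBelow x y) ⟨v₁, h₁, v₂, h₂, n₁, n₂, rfl⟩

lemma projDist_comm (x y : Submodule ℝ V) : projDist x y = projDist y x := by
  unfold projDist
  congr 1
  ext r
  constructor
  · rintro ⟨v₁, h₁, v₂, h₂, n₁, n₂, rfl⟩
    exact ⟨v₂, h₂, v₁, h₁, n₂, n₁, (norm_sub_rev _ _)⟩
  · rintro ⟨v₁, h₁, v₂, h₂, n₁, n₂, rfl⟩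
    exact ⟨v₂, h₂, v₁, h₁, n₂, n₁, (norm_sub_rev _ _)⟩

lemma exists_unit {x : Submodule ℝ V} (hx : Module.finrank ℝ x = 1) :
    ∃ u ∈ x, ‖u‖ = 1 := by
  have hne : x ≠ ⊥ := by
    intro h; rw [h] at hx; simp [finrank_bot] at hx
  obtain ⟨w, hw, hw0⟩ := Submodule.exists_mem_ne_zero_of_ne_bot hne
  refine ⟨(‖w‖ : ℝ)⁻¹ • w, x.smul_mem _ hw, ?_⟩
  exact norm_smul_inv_norm (𝕜 := ℝ) hw0

lemma projDist_set_nonempty {x y : Submodule ℝ V} (hx : Module.finrank ℝ x = 1)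
    (hy : Module.finrank ℝ y = 1) :
    {r : ℝ | ∃ v₁ ∈ x, ∃ v₂ ∈ y, ‖v₁‖ = 1 ∧ ‖v₂‖ = 1 ∧ r = ‖v₁ - v₂‖}.Nonempty := by
  obtain ⟨u, hu, nu⟩ := exists_unit hx
  obtain ⟨w, hw, nw⟩ := exists_unit hy
  exact ⟨‖u - w‖, u, hu, w, hw, nu, nw, rfl⟩

lemma projDist_le_two {x y : Submodule ℝ V} (hx : Module.finrank ℝ x = 1)
    (hy : Module.finrank ℝ y = 1) : projDist x y ≤ 2 := by
  obtain ⟨u, hu, nu⟩ := exists_unit hx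
  obtain ⟨w, hw, nw⟩ := exists_unit hy
  calc projDist x y ≤ ‖u - w‖ := projDist_le hu hw nu nw
    _ ≤ ‖u‖ + ‖w‖ := norm_sub_le _ _
    _ = 2 := by rw [nu, nw]; norm_num

lemma pm_of_unit [FiniteDimensional ℝ V] {z : Submodule ℝ V} (hz : Module.finrank ℝ z = 1) {q q' : V}
    (hq : q ∈ z) (hq' : q' ∈ z) (nq : ‖q‖ = 1) (nq' : ‖q'‖ = 1) : q' = q ∨ q' = -q := by
  have hq0 : q ≠ 0 := by intro h; rw [h] at nq; simp at nq
  have hspan : Submodule.span ℝ {q} = z := by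
    apply Submodule.eq_of_le_of_finrank_le
    · exact Submodule.span_le.2 (Set.singleton_subset_iff.2 hq)
    · rw [hz, finrank_span_singleton hq0]
  have : q' ∈ Submodule.span ℝ {q} := hspan ▸ hq'
  obtain ⟨c, rfl⟩ := Submodule.mem_span_singleton.1 this
  have hc : |c| = 1 := by
    rw [norm_smul, Real.norm_eq_abs, nq, mul_one] at nq'; exact nq'
  rcases (abs_eq (by norm_num : (0:ℝ) ≤ 1)).1 hc with h | h
  · left; rw [h, one_smul]
  · right; rw [h, neg_smul, one_smul]

lemma projDist_triangle [FiniteDimensional ℝ V] {x z y : Submodule ℝ V} (hx : Module.finrank ℝ x = 1)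
    (hz : Module.finrank ℝ z = 1) (hy : Module.finrank ℝ y = 1) :
    projDist x y ≤ projDist x z + projDist z y := by
  have key : ∀ r₁ ∈ {r : ℝ | ∃ v₁ ∈ x, ∃ v₂ ∈ z, ‖v₁‖ = 1 ∧ ‖v₂‖ = 1 ∧ r = ‖v₁ - v₂‖},
      ∀ r₂ ∈ {r : ℝ | ∃ v₁ ∈ z, ∃ v₂ ∈ y, ‖v₁‖ = 1 ∧ ‖v₂‖ = 1 ∧ r = ‖v₁ - v₂‖},
      projDist x y ≤ r₁ + r₂ := by
    rintro r₁ ⟨p, hp, q, hqz, np, nq, rfl⟩ r₂ ⟨q', hq'z, s, hs, nq', ns, rfl⟩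
    rcases pm_of_unit hz hqz hq'z nq nq' with h | h
    · subst h
      calc projDist x y ≤ ‖p - s‖ := projDist_le hp hs np ns
        _ ≤ ‖p - q'‖ + ‖q' - s‖ := norm_sub_le_norm_sub_add_norm_sub _ _ _
    · have hns : ‖-s‖ = 1 := by rwa [norm_neg]
      calc projDist x y ≤ ‖p - (-s)‖ := projDist_le hp (y.neg_mem hs) np hns
        _ ≤ ‖p - q‖ + ‖q - (-s)‖ := norm_sub_le_norm_sub_add_norm_sub _ _ _
        _ = ‖p - q‖ + ‖q' - s‖ := by rw [h]; congr 1; rw [← neg_sub, norm_neg]; congr 1; abel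
  have h1 : projDist x y - projDist z y ≤ projDist x z := by
    apply le_csInf (projDist_set_nonempty hx hz)
    intro r₁ hr₁
    have h2 : projDist x y - r₁ ≤ projDist z y := by
      apply le_csInf (projDist_set_nonempty hz hy)
      intro r₂ hr₂
      linarith [key r₁ hr₁ r₂ hr₂]
    linarith
  linarith [h1]

end Aux

namespace Aux2
open Aux

lemma projDelta_set_nonneg (x Wq : Submodule ℝ V) :
    ∀ r ∈ {r : ℝ | ∃ y : Submodule ℝ V, y ≤ Wq ∧ Module.finrank ℝ y = 1 ∧ r = projDist x y},
      0 ≤ r := by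
  rintro r ⟨y, hy, hy1, rfl⟩; exact projDist_nonneg x y

lemma projDelta_nonneg (x Wq : Submodule ℝ V) : 0 ≤ projDelta x Wq :=
  Real.sInf_nonneg (projDelta_set_nonneg x Wq)

lemma projDelta_le {x Wq y : Submodule ℝ V} (hy : y ≤ Wq) (hy1 : Module.finrank ℝ y = 1) :
    projDelta x Wq ≤ projDist x y :=
  csInf_le ⟨0, projDelta_set_nonneg x Wq⟩ ⟨y, hy, hy1, rfl⟩

lemma exists_line {Wq : Submodule ℝ V} (hW : Wq ≠ ⊥) :
    ∃ y : Submodule ℝ V, y ≤ Wq ∧ Module.finrank ℝ y = 1 := by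
  obtain ⟨w, hw, hw0⟩ := Submodule.exists_mem_ne_zero_of_ne_bot hW
  exact ⟨Submodule.span ℝ {w}, Submodule.span_le.2 (Set.singleton_subset_iff.2 hw),
    finrank_span_singleton hw0⟩

lemma projDelta_bot (x : Submodule ℝ V) : projDelta x (⊥ : Submodule ℝ V) = 0 := by
  unfold projDelta
  convert Real.sInf_empty using 2
  ext r
  simp only [Set.mem_empty_iff_false, iff_false, Set.mem_setOf_eq]
  rintro ⟨y, hy, hy1, rfl⟩
  rw [le_bot_iff.1 hy] at hy1
  simp [finrank_bot] at hy1

/-- `δ(x, W) ≤ d(x, z) + δ(z, W)`. -/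
lemma projDelta_le_dist_add [FiniteDimensional ℝ V] {x z Wq : Submodule ℝ V}
    (hW : Wq ≠ ⊥) (hx : Module.finrank ℝ x = 1) (hz : Module.finrank ℝ z = 1) :
    projDelta x Wq ≤ projDist x z + projDelta z Wq := by
  obtain ⟨y₀, hy₀, hy₀1⟩ := exists_line hW
  have h2 : projDelta x Wq - projDist x z ≤ projDelta z Wq := by
    refine le_csInf ⟨projDist z y₀, ⟨y₀, hy₀, hy₀1, rfl⟩⟩ ?_
    rintro r ⟨y, hy, hy1, rfl⟩
    have := projDelta_le (x := x) hy hy1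
    have := projDist_triangle hx hz hy1
    linarith
  linarith

end Aux2

namespace AuxS

variable {E : Type*} [NormedAddCommGroup E] [NormedSpace ℝ E]

lemma seq_bdd (B : E →L[ℝ] E) :
    Filter.IsBoundedUnder (· ≤ ·) Filter.atTop (fun n : ℕ => ‖B ^ n‖ ^ ((1 : ℝ) / n)) := by
  refine ⟨max 1 ‖B‖, Filter.eventually_map.2 ?_⟩
  filter_upwards [Filter.eventually_ge_atTop 1] with n hn
  have h1 : ‖B ^ n‖ ≤ ‖B‖ ^ n := norm_pow_le' B hn
  have h2 : ‖B ^ n‖ ^ ((1:ℝ)/n) ≤ (‖B‖ ^ n) ^ ((1:ℝ)/n) :=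
    Real.rpow_le_rpow (norm_nonneg _) h1 (by positivity)
  have h3 : ((‖B‖ ^ n : ℝ)) ^ ((1:ℝ)/n) = ‖B‖ := by
    rw [← Real.rpow_natCast ‖B‖ n, ← Real.rpow_mul (norm_nonneg B)]
    rw [mul_one_div, div_self (by exact_mod_cast Nat.one_le_iff_ne_zero.1 hn), Real.rpow_one]
  exact le_trans (h2.trans h3.le) (le_max_right _ _)

/-- any real eigenvalue modulus is at most the spectral radius -/
lemma abs_eig_le_specRad (B : E →L[ℝ] E) {lam : ℝ} {w : E} (hw : w ≠ 0)
    (h : B w = lam • w) : |lam| ≤ specRad B := by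
  have hn : ∀ n : ℕ, (B ^ n) w = lam ^ n • w := by
    intro n
    induction n with
    | zero => simp
    | succ k ih =>
      rw [pow_succ, ContinuousLinearMap.mul_apply, h, map_smul, ih, smul_smul, ← pow_succ']
  have key : ∀ n : ℕ, 1 ≤ n → |lam| ≤ ‖B ^ n‖ ^ ((1:ℝ)/n) := by
    intro n hn1
    have h1 : |lam| ^ n * ‖w‖ ≤ ‖B ^ n‖ * ‖w‖ := by
      have := (B ^ n).le_opNorm w
      rw [hn n] at this
      rw [norm_smul, Real.norm_eq_abs, abs_pow] at this
      exact this
    have hw' : 0 < ‖w‖ := norm_pos_iff.2 hw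
    have h2 : |lam| ^ n ≤ ‖B ^ n‖ := le_of_mul_le_mul_right h1 hw'
    have h3 : (|lam| ^ n : ℝ) ^ ((1:ℝ)/n) ≤ ‖B ^ n‖ ^ ((1:ℝ)/n) :=
      Real.rpow_le_rpow (by positivity) h2 (by positivity)
    have h4 : ((|lam| ^ n : ℝ)) ^ ((1:ℝ)/n) = |lam| := by
      rw [← Real.rpow_natCast |lam| n, ← Real.rpow_mul (abs_nonneg lam)]
      rw [mul_one_div, div_self (by exact_mod_cast Nat.one_le_iff_ne_zero.1 hn1), Real.rpow_one]
    rwa [h4] at h3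
  refine Filter.le_limsup_of_frequently_le ?_ (seq_bdd B)
  exact ((Filter.eventually_ge_atTop 1).mono fun n hn => key n hn).frequently

lemma pow_norm_le (B : E →L[ℝ] E) {M : ℝ} (hM : 0 < M) (h : specRad B < M) :
    ∃ C : ℝ, 0 < C ∧ ∀ n : ℕ, ‖B ^ n‖ ≤ C * M ^ n := by
  have hev : ∀ᶠ n : ℕ in Filter.atTop, ‖B ^ n‖ ^ ((1:ℝ)/n) < M :=
    Filter.eventually_lt_of_limsup_lt h (seq_bdd B)
  obtain ⟨N, hN⟩ := (hev.and (Filter.eventually_ge_atTop 1)).exists_forall_of_atTop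
  set C : ℝ := 1 + ∑ k ∈ Finset.range N, ‖B ^ k‖ / M ^ k with hC
  have hCpos : 0 < C := by
    have : 0 ≤ ∑ k ∈ Finset.range N, ‖B ^ k‖ / M ^ k :=
      Finset.sum_nonneg fun k _ => by positivity
    rw [hC]; linarith
  refine ⟨C, hCpos, fun n => ?_⟩
  by_cases hn : N ≤ n
  · obtain ⟨h1, h2⟩ := hN n hn
    have hMn : (0:ℝ) < M ^ n := by positivity
    have : ‖B ^ n‖ ≤ M ^ n := by
      have h3 : (‖B ^ n‖ ^ ((1:ℝ)/n)) ^ n ≤ M ^ n :=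
        pow_le_pow_left₀ (Real.rpow_nonneg (norm_nonneg _) _) h1.le n
      have h4 : (‖B ^ n‖ ^ ((1:ℝ)/n)) ^ n = ‖B ^ n‖ := by
        rw [← Real.rpow_natCast (‖B ^ n‖ ^ ((1:ℝ)/n)) n, ← Real.rpow_mul (norm_nonneg _)]
        rw [one_div, inv_mul_cancel₀ (by exact_mod_cast Nat.one_le_iff_ne_zero.1 h2), Real.rpow_one]
      rwa [h4] at h3
    calc ‖B ^ n‖ ≤ M ^ n := this
      _ ≤ C * M ^ n := by
        have hC1 : 1 ≤ C := by
          have : 0 ≤ ∑ k ∈ Finset.range N, ‖B ^ k‖ / M ^ k :=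
            Finset.sum_nonneg fun k _ => by positivity
          rw [hC]; linarith
        nlinarith [hMn.le]
  · push_neg at hn
    have hmem : ‖B ^ n‖ / M ^ n ≤ ∑ k ∈ Finset.range N, ‖B ^ k‖ / M ^ k :=
      Finset.single_le_sum (f := fun k => ‖B ^ k‖ / M ^ k) (fun k _ => by positivity) (Finset.mem_range.2 hn)
    have hMn : (0:ℝ) < M ^ n := by positivity
    rw [div_le_iff₀ hMn] at hmem
    calc ‖B ^ n‖ ≤ (∑ k ∈ Finset.range N, ‖B ^ k‖ / M ^ k) * M ^ n := hmem
      _ ≤ C * M ^ n := by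
        apply mul_le_mul_of_nonneg_right _ hMn.le
        rw [hC]; linarith


lemma decomp {v : V} {Wv : Submodule ℝ V} (hc : IsCompl (Submodule.span ℝ {v}) Wv)
    (u : V) : ∃ s : ℝ, ∃ w ∈ Wv, u = s • v + w := by
  have : u ∈ Submodule.span ℝ {v} ⊔ Wv := by
    rw [hc.codisjoint.eq_top]; trivial
  obtain ⟨y, hy, z, hz, hyz⟩ := Submodule.mem_sup.1 this
  obtain ⟨s, rfl⟩ := Submodule.mem_span_singleton.1 hy
  exact ⟨s, z, hz, hyz.symm⟩

lemma eq_zero_of_mem_disjoint {p q : Submodule ℝ V} (h : Disjoint p q) {x : V}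
    (hp : x ∈ p) (hq : x ∈ q) : x = 0 :=
  Submodule.disjoint_def.1 h x hp hq

/-- The attracting line of `g⁻¹` lies in the repelling hyperplane of `g`. -/
lemma attract_mem_repel [FiniteDimensional ℝ V] {g g' : V →L[ℝ] V}
    (hgg' : ∀ x, g (g' x) = x) (hg'g : ∀ x, g' (g x) = x)
    {a a' : ℝ} {v v' : V} {Wv Wv' : Submodule ℝ V}
    (hp : IsProximalWith g a v Wv) (hp' : IsProximalWith g' a' v' Wv')
    (hW' : Wv' ≠ ⊥) : v' ∈ Wv := by
  obtain ⟨hv0, hgv, hcompl, A, hA, hAspec⟩ := hp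
  obtain ⟨hv'0, hg'v', hcompl', A', hA', hA'spec⟩ := hp'
  have hginj : Function.Injective g := Function.LeftInverse.injective hg'g
  have hg'inj : Function.Injective g' := Function.LeftInverse.injective hgg'
  have ha' : a' ≠ 0 := by
    intro h; rw [h, zero_smul] at hg'v'
    exact hv'0 (by rw [← hgg' v', hg'v', map_zero])
  have ha : a ≠ 0 := by
    intro h; rw [h, zero_smul] at hgv
    exact hv0 (by rw [← hg'g v, hgv, map_zero])
  set β := a'⁻¹ with hβ
  have hgv' : g v' = β • v' := by
    have h1 : v' = a' • g v' := by
      conv_lhs => rw [← hgg' v']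
      rw [hg'v', map_smul]
    have : a' • g v' = a' • (β • v') := by
      rw [← h1, hβ, smul_smul, mul_inv_cancel₀ ha', one_smul]
    exact smul_right_injective V ha' this
  obtain ⟨s, w, hw, hv'sw⟩ := decomp hcompl v'
  have hgw_mem : g w ∈ Wv := by
    rw [hA ⟨w, hw⟩]; exact (A ⟨w, hw⟩).2
  have key : (s * a - β * s) • v = β • w - g w := by
    have e1 : g v' = (s * a) • v + g w := by
      rw [hv'sw, map_add, map_smul, hgv, smul_smul]
    have e2 : g v' = (β * s) • v + β • w := by
      rw [hgv', hv'sw, smul_add, smul_smul]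
    have := e1.symm.trans e2
    rw [sub_smul]
    have : (s*a) • v - (β*s) • v = β • w - g w := by
      have h3 : (s*a) • v + g w = (β*s) • v + β • w := this
      linear_combination (norm := module) h3
    exact this
  have hzero : (s * a - β * s) • v = 0 := by
    apply eq_zero_of_mem_disjoint hcompl.disjoint
    · exact Submodule.smul_mem _ _ (Submodule.mem_span_singleton_self v)
    · rw [key]; exact Submodule.sub_mem _ (Submodule.smul_mem _ _ hw) hgw_mem
  have hcoef : s * a = β * s := by
    rcases smul_eq_zero.1 hzero with h | h
    · exact sub_eq_zero.1 h
    · exact absurd h hv0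
  have hgwβ : g w = β • w := by
    have h0 := key
    rw [show s * a - β * s = 0 by rw [hcoef]; ring, zero_smul] at h0
    exact (sub_eq_zero.1 h0.symm).symm
  by_cases hs : s = 0
  · rw [hv'sw, hs, zero_smul, zero_add]; exact hw
  exfalso
  have haβ : a = β := mul_left_cancel₀ hs (by rw [hcoef]; ring)
  by_cases hw0 : w = 0
  · -- degenerate case : v' spans the same line as v; derive a growth contradiction
    have ha'a : a' = a⁻¹ := by rw [haβ, hβ]; simp
    have habs : (0:ℝ) < |a| := abs_pos.2 ha
    have hinv : (0:ℝ) < |a|⁻¹ := by positivity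
    have hA'spec2 : specRad A' < |a|⁻¹ := by rwa [ha'a, abs_inv] at hA'spec
    set r' : ℝ := (max (specRad A') 0 + |a|⁻¹)/2 with hr'
    have hmax : max (specRad A') 0 < |a|⁻¹ := max_lt hA'spec2 hinv
    have r'0 : 0 < r' := by
      have := le_max_right (specRad A') 0
      rw [hr']; linarith
    have r'spec : specRad A' < r' := by
      have := le_max_left (specRad A') 0
      rw [hr']; linarith
    have r'lt : r' < |a|⁻¹ := by rw [hr']; linarith
    set ρ : ℝ := (max (specRad A) 0 + |a|)/2 with hρ
    have hmax2 : max (specRad A) 0 ≤ |a| := max_le hAspec.le habs.le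
    have ρ0 : 0 < ρ := by
      have := le_max_right (specRad A) 0
      rw [hρ]; linarith
    have ρspec : specRad A < ρ := by
      have h1 := le_max_left (specRad A) 0
      have h2 : max (specRad A) 0 < |a| := max_lt hAspec habs
      rw [hρ]; linarith
    have ρle : ρ ≤ |a| := by rw [hρ]; linarith
    obtain ⟨C, hC0, hCb⟩ := pow_norm_le A' r'0 r'spec
    obtain ⟨C₂, hC₂0, hC₂b⟩ := pow_norm_le A ρ0 ρspec
    obtain ⟨u, hu, hu0⟩ := Submodule.exists_mem_ne_zero_of_ne_bot hW'
    obtain ⟨c, wu, hwu, hudec⟩ := decomp hcompl u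
    have claim1 : ∀ n : ℕ, (g ^ n) u = (a ^ n * c) • v + ((A ^ n) ⟨wu, hwu⟩ : V) := by
      intro n
      induction n with
      | zero => simpa using hudec
      | succ k ih =>
        rw [pow_succ', ContinuousLinearMap.mul_apply, ih, map_add, map_smul, hgv,
          hA ((A ^ k) ⟨wu, hwu⟩)]
        have hcoe : (A ((A ^ k) ⟨wu, hwu⟩) : V) = ((A ^ (k+1)) ⟨wu, hwu⟩ : V) := by
          rw [pow_succ' A k, ContinuousLinearMap.mul_apply]
        rw [hcoe, smul_smul]
        congr 1
        rw [show a ^ k * c * a = a ^ (k+1) * c by ring]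
    have hA'inj : Function.Injective A' := by
      intro x y hxy
      apply Subtype.coe_injective
      apply hg'inj
      rw [hA' x, hA' y, hxy]
    have hA'surj : Function.Surjective ⇑A' := by
      have := (LinearMap.injective_iff_surjective (f := (A' : Wv' →ₗ[ℝ] Wv'))).mp
      simpa using this hA'inj
    have claim2 : ∀ n : ℕ, ∃ e : Wv', ((A' ^ n) e : V) = u ∧ (e : V) = (g ^ n) u := by
      intro n
      induction n with
      | zero => exact ⟨⟨u, hu⟩, by simp, by simp⟩
      | succ k ih =>
        obtain ⟨e, he1, he2⟩ := ih
        obtain ⟨e₁, he₁⟩ := hA'surj e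
        refine ⟨e₁, ?_, ?_⟩
        · rw [pow_succ, ContinuousLinearMap.mul_apply, he₁, he1]
        · have hg'e : g' (e₁ : V) = (e : V) := by rw [hA' e₁, he₁]
          have : (e₁ : V) = g (e : V) := by rw [← hg'e, hgg']
          rw [this, he2, pow_succ', ContinuousLinearMap.mul_apply]
    set K : ℝ := |c| * ‖v‖ + C₂ * ‖wu‖ with hK
    have hK0 : 0 ≤ K := by rw [hK]; positivity
    have hbound : ∀ n : ℕ, ‖(g ^ n) u‖ ≤ K * |a| ^ n := by
      intro n
      have hterm1 : ‖(a ^ n * c) • v‖ = |a| ^ n * (|c| * ‖v‖) := by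
        rw [norm_smul, Real.norm_eq_abs, abs_mul, abs_pow]; ring
      have hterm2 : ‖((A ^ n) ⟨wu, hwu⟩ : V)‖ ≤ (C₂ * ρ ^ n) * ‖wu‖ := by
        have h1 : ‖((A ^ n) ⟨wu, hwu⟩ : V)‖ = ‖(A ^ n) ⟨wu, hwu⟩‖ :=
          (Submodule.coe_norm _).symm
        have h2 := (A ^ n).le_opNorm (⟨wu, hwu⟩ : Wv)
        have h3 : ‖(⟨wu, hwu⟩ : Wv)‖ = ‖wu‖ := Submodule.coe_norm _
        have h4 : ‖A ^ n‖ * ‖(⟨wu, hwu⟩ : Wv)‖ ≤ (C₂ * ρ ^ n) * ‖wu‖ := by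
          rw [h3]; exact mul_le_mul_of_nonneg_right (hC₂b n) (norm_nonneg wu)
        rw [h1]; exact h2.trans h4
      have hρn : ρ ^ n ≤ |a| ^ n := pow_le_pow_left₀ ρ0.le ρle n
      have hρn' : (C₂ * ρ ^ n) * ‖wu‖ ≤ (C₂ * ‖wu‖) * |a| ^ n := by
        have h5 := mul_le_mul_of_nonneg_left hρn (by positivity : (0:ℝ) ≤ C₂ * ‖wu‖)
        calc (C₂ * ρ ^ n) * ‖wu‖ = (C₂ * ‖wu‖) * ρ ^ n := by ring
          _ ≤ (C₂ * ‖wu‖) * |a| ^ n := h5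
      calc ‖(g ^ n) u‖ = ‖(a ^ n * c) • v + ((A ^ n) ⟨wu, hwu⟩ : V)‖ := by rw [claim1 n]
        _ ≤ ‖(a ^ n * c) • v‖ + ‖((A ^ n) ⟨wu, hwu⟩ : V)‖ := norm_add_le _ _
        _ ≤ |a| ^ n * (|c| * ‖v‖) + (C₂ * ‖wu‖) * |a| ^ n := by rw [hterm1]; linarith
        _ = K * |a| ^ n := by rw [hK]; ring
    have hfinal : ∀ n : ℕ, ‖u‖ ≤ (C * K) * (r' * |a|) ^ n := by
      intro n
      obtain ⟨e, he1, he2⟩ := claim2 n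
      have h1 : ‖u‖ = ‖(A' ^ n) e‖ := by rw [← he1, Submodule.coe_norm]
      have h2 : ‖(A' ^ n) e‖ ≤ ‖A' ^ n‖ * ‖e‖ := (A' ^ n).le_opNorm e
      have h3 : ‖e‖ = ‖(g ^ n) u‖ := by rw [← he2, Submodule.coe_norm]
      calc ‖u‖ = ‖(A' ^ n) e‖ := h1
        _ ≤ ‖A' ^ n‖ * ‖e‖ := h2
        _ ≤ (C * r' ^ n) * (K * |a| ^ n) := by
            rw [h3]
            exact mul_le_mul (hCb n) (hbound n) (norm_nonneg _) (by positivity)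
        _ = (C * K) * (r' * |a|) ^ n := by rw [mul_pow]; ring
    have hq1 : r' * |a| < 1 := by
      calc r' * |a| < |a|⁻¹ * |a| := mul_lt_mul_of_pos_right r'lt habs
        _ = 1 := inv_mul_cancel₀ habs.ne'
    have htend : Filter.Tendsto (fun n : ℕ => (C * K) * (r' * |a|) ^ n) Filter.atTop (nhds 0) := by
      have := tendsto_pow_atTop_nhds_zero_of_lt_one (by positivity : (0:ℝ) ≤ r' * |a|) hq1
      simpa using this.const_mul (C * K)
    have : ‖u‖ ≤ 0 := ge_of_tendsto' htend hfinal
    exact hu0 (norm_le_zero_iff.1 this)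
  · -- w is an eigenvector of A with eigenvalue β = a : contradicts specRad A < |a|
    have hAw : A ⟨w, hw⟩ = β • ⟨w, hw⟩ := by
      have h1 : ((A ⟨w, hw⟩ : Wv) : V) = ((β • (⟨w, hw⟩ : Wv) : Wv) : V) := by
        rw [← hA ⟨w, hw⟩, Submodule.coe_smul]
        exact hgwβ
      exact Subtype.coe_injective h1
    have hwne : (⟨w, hw⟩ : Wv) ≠ 0 := by
      intro h; exact hw0 (by simpa using congrArg Subtype.val h)
    have := abs_eig_le_specRad A hwne hAw
    rw [← haβ] at this
    linarith

end AuxS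


lemma chain'_of_no_invpair {A : Type*} :
    ∀ L : List (A × Bool), (∀ (L1 L2 : List (A × Bool)) (x : A) (b : Bool),
      L ≠ L1 ++ (x, b) :: (x, !b) :: L2) →
    List.Chain' (fun p q : A × Bool => ¬(q.1 = p.1 ∧ q.2 = !p.2)) L
  | [], _ => List.isChain_nil
  | [a], _ => List.isChain_singleton a
  | a :: b :: L, h => by
    apply List.isChain_cons_cons.2
    refine ⟨?_, chain'_of_no_invpair (b :: L) fun L1 L2 x bb hh =>
      h (a :: L1) L2 x bb (by rw [hh]; rfl)⟩
    rintro ⟨h1, h2⟩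
    exact h [] L a.1 a.2 (by rw [← Prod.mk.eta (p := a), ← h1, ← h2]; rfl)

lemma perturb_dist [FiniteDimensional ℝ V] {P : V →L[ℝ] V} {d : ℝ} (hd1 : d < 1)
    (hP : ‖P - 1‖ ≤ d) {x : Submodule ℝ V} (hx : Module.finrank ℝ x = 1) :
    projDist (Submodule.map (P : V →ₗ[ℝ] V) x) x ≤ 2 * d := by
  obtain ⟨u, hu, nu⟩ := Aux.exists_unit hx
  have hPu : ‖P u - u‖ ≤ d := by
    have h1 := (P - 1).le_opNorm u
    rw [ContinuousLinearMap.sub_apply, ContinuousLinearMap.one_apply, nu, mul_one] at h1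
    exact h1.trans hP
  have habs : |‖P u‖ - 1| ≤ d := by
    have := abs_norm_sub_norm_le (P u) u
    rw [nu] at this
    exact this.trans hPu
  have hnorm : 1 - d ≤ ‖P u‖ := by
    have := (abs_le.1 habs).1; linarith
  have hPu0 : P u ≠ 0 := by
    intro h; rw [h, norm_zero] at hnorm; linarith
  set w' : V := ‖P u‖⁻¹ • (P u) with hw'
  have hPumem : P u ∈ Submodule.map (P : V →ₗ[ℝ] V) x := ⟨u, hu, rfl⟩
  have hw'mem : w' ∈ Submodule.map (P : V →ₗ[ℝ] V) x := Submodule.smul_mem _ _ hPumem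
  have nw' : ‖w'‖ = 1 := norm_smul_inv_norm (𝕜 := ℝ) hPu0
  have hle : projDist (Submodule.map (P : V →ₗ[ℝ] V) x) x ≤ ‖w' - u‖ :=
    Aux.projDist_le hw'mem hu nw' nu
  have h2 : ‖w' - P u‖ = |1 - ‖P u‖| := by
    have hnz : ‖P u‖ ≠ 0 := norm_ne_zero_iff.2 hPu0
    have e1 : w' - P u = (‖P u‖⁻¹ - 1) • P u := by rw [hw', sub_smul, one_smul]
    rw [e1, norm_smul, Real.norm_eq_abs]
    rw [show |‖P u‖⁻¹ - 1| * ‖P u‖ = |(‖P u‖⁻¹ - 1) * ‖P u‖| by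
      rw [abs_mul, abs_of_nonneg (norm_nonneg (P u))]]
    rw [sub_mul, inv_mul_cancel₀ hnz, one_mul]
  have h3 : |1 - ‖P u‖| ≤ d := by rw [abs_sub_comm]; exact habs
  calc projDist (Submodule.map (P : V →ₗ[ℝ] V) x) x ≤ ‖w' - u‖ := hle
    _ ≤ ‖w' - P u‖ + ‖P u - u‖ := norm_sub_le_norm_sub_add_norm_sub _ _ _
    _ ≤ d + d := by rw [h2]; exact add_le_add h3 hPu
    _ = 2 * d := by ring

noncomputable def mapU (u : (V →L[ℝ] V)ˣ) (x : Submodule ℝ V) : Submodule ℝ V :=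
  Submodule.map (((u : V →L[ℝ] V)) : V →ₗ[ℝ] V) x

lemma mapU_mul (u₁ u₂ : (V →L[ℝ] V)ˣ) (x : Submodule ℝ V) :
    mapU (u₁ * u₂) x = mapU u₁ (mapU u₂ x) := by
  unfold mapU
  rw [Units.val_mul, ContinuousLinearMap.mul_def, ← Submodule.map_comp]; rfl


/-- Remark 6.5: a group generated by `γ₁, …, γ_t` (`t ≥ 2`) that is `ε`-Schottky on
`ℙ(V)` — each `h ∈ E = {γᵢ^{±1}}` is `ε`-proximal with attracting line `span (v i b)` and
repelling hyperplane `W i b` (`b = true` for `γᵢ`, `b = false` for `γᵢ⁻¹`), and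
`δ(x_h⁺, X_{h'}^<) ≥ 6ε` whenever `h' ≠ h⁻¹` — is free on `γ₁, …, γ_t` and discrete in
`GL(V)`. -/
theorem stmt_18 [FiniteDimensional ℝ V] (t : ℕ) (ht : 2 ≤ t) (ε : ℝ) (hε : 0 < ε)
    (γ : Fin t → (V →L[ℝ] V)ˣ)
    (α : Fin t → Bool → ℝ) (v : Fin t → Bool → V) (W : Fin t → Bool → Submodule ℝ V)
    (hprox : ∀ i b, IsEpsProximalWith
      (cond b (↑(γ i) : V →L[ℝ] V) (↑(γ i)⁻¹ : V →L[ℝ] V)) ε (α i b) (v i b) (W i b))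
    (hsep : ∀ (i : Fin t) (b : Bool) (j : Fin t) (c : Bool), (j, c) ≠ (i, !b) →
      6 * ε ≤ projDelta (Submodule.span ℝ {v i b}) (W j c)) :
    Function.Injective (FreeGroup.lift γ : FreeGroup (Fin t) →* (V →L[ℝ] V)ˣ) ∧
    DiscreteTopology (Subgroup.closure (Set.range γ) : Subgroup (V →L[ℝ] V)ˣ) := by
  classical
  set Rr : (Fin t × Bool) → (Fin t × Bool) → Prop :=
    fun p q => ¬(q.1 = p.1 ∧ q.2 = !p.2) with hRrdef
  set letterU : Fin t × Bool → (V →L[ℝ] V)ˣ :=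
    fun p => cond p.2 (γ p.1) (γ p.1)⁻¹ with hletter
  have hletterCLM : ∀ i b, ((letterU (i, b) : (V →L[ℝ] V)ˣ) : V →L[ℝ] V)
      = cond b (↑(γ i)) (↑(γ i)⁻¹) := by
    intro i b; cases b <;> rfl
  have hpairne : ∀ (i : Fin t) (b : Bool), (i, b) ≠ (i, !b) := by
    intro i b hh
    rw [Prod.mk.injEq] at hh
    simp at hh
  have hWne : ∀ i b, W i b ≠ ⊥ := by
    intro i b h
    have h6 := hsep i b i b (hpairne i b)
    rw [h, Aux2.projDelta_bot] at h6
    linarith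
  have hvne : ∀ i b, v i b ≠ 0 := fun i b => (hprox i b).1.1
  have hrankv : ∀ i b, Module.finrank ℝ (Submodule.span ℝ {v i b}) = 1 :=
    fun i b => finrank_span_singleton (hvne i b)
  have : Nontrivial V := ⟨_, _, hvne ⟨0, by omega⟩ true⟩
  have hε13 : ε ≤ 1/3 := by
    obtain ⟨y, hy, hy1⟩ := Aux2.exists_line (hWne ⟨0, by omega⟩ true)
    have h6 := hsep ⟨0, by omega⟩ true ⟨0, by omega⟩ true (hpairne ⟨0, by omega⟩ true)
    have h2 := Aux2.projDelta_le (x := Submodule.span ℝ {v ⟨0, by omega⟩ true}) hy hy1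
    have h3 := Aux.projDist_le_two (hrankv ⟨0, by omega⟩ true) hy1
    linarith
  -- single-letter facts
  have hone : ∀ (i : Fin t) (b : Bool) (x : Submodule ℝ V), Module.finrank ℝ x = 1 →
      ε ≤ projDelta x (W i b) →
      Module.finrank ℝ (mapU (letterU (i, b)) x) = 1 ∧
      projDist (mapU (letterU (i, b)) x) (Submodule.span ℝ {v i b}) ≤ ε := by
    intro i b x hx hδ
    have h3 := (hprox i b).2.2.1 x hx hδ
    have hbot : mapU (letterU (i, b)) x ≠ ⊥ := by
      unfold mapU; rw [hletterCLM]; exact h3.1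
    constructor
    · have hle : Module.finrank ℝ (mapU (letterU (i, b)) x) ≤ 1 := by
        have := Submodule.finrank_map_le
          ((((letterU (i, b) : (V →L[ℝ] V)ˣ) : V →L[ℝ] V)) : V →ₗ[ℝ] V) x
        rw [hx] at this
        exact this
      have h0 : Module.finrank ℝ (mapU (letterU (i, b)) x) ≠ 0 :=
        fun h => hbot (Submodule.finrank_eq_zero.1 h)
      omega
    · unfold mapU; rw [hletterCLM]; exact h3.2
  have honeLip : ∀ (i : Fin t) (b : Bool) (x y : Submodule ℝ V),
      Module.finrank ℝ x = 1 → Module.finrank ℝ y = 1 →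
      ε ≤ projDelta x (W i b) → ε ≤ projDelta y (W i b) →
      projDist (mapU (letterU (i, b)) x) (mapU (letterU (i, b)) y) ≤ ε * projDist x y := by
    intro i b x y hx hy hδx hδy
    have h4 := (hprox i b).2.2.2 x y hx hy hδx hδy
    unfold mapU; rw [hletterCLM]; exact h4
  -- the key ping-pong induction
  have keyLemma : ∀ (L : List (Fin t × Bool)) (i : Fin t) (b : Bool),
      List.Chain' Rr ((i, b) :: L) →
      ∀ x y : Submodule ℝ V, Module.finrank ℝ x = 1 → Module.finrank ℝ y = 1 →
      ε ≤ projDelta x (W (L.getLastD (i, b)).1 (L.getLastD (i, b)).2) →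
      ε ≤ projDelta y (W (L.getLastD (i, b)).1 (L.getLastD (i, b)).2) →
      Module.finrank ℝ (mapU ((((i, b) :: L).map letterU).prod) x) = 1 ∧
      projDist (mapU ((((i, b) :: L).map letterU).prod) x) (Submodule.span ℝ {v i b}) ≤ ε ∧
      projDist (mapU ((((i, b) :: L).map letterU).prod) x)
        (mapU ((((i, b) :: L).map letterU).prod) y) ≤ ε * projDist x y := by
    intro L
    induction L with
    | nil =>
      intro i b hch x y hx hy hδx hδy
      have hδx' : ε ≤ projDelta x (W i b) := hδx
      have hδy' : ε ≤ projDelta y (W i b) := hδy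
      have hP : (([(i, b)]).map letterU).prod = letterU (i, b) := by simp
      rw [hP]
      obtain ⟨hr, hd⟩ := hone i b x hx hδx'
      refine ⟨hr, hd, honeLip i b x y hx hy hδx' hδy'⟩
    | cons p L' ih =>
      obtain ⟨i₂, b₂⟩ := p
      intro i b hch x y hx hy hδx hδy
      have hRr1 : Rr (i, b) (i₂, b₂) := (List.isChain_cons_cons.1 hch).1
      have hch2 : List.Chain' Rr ((i₂, b₂) :: L') := (List.isChain_cons_cons.1 hch).2
      rw [List.getLastD_cons] at hδx hδy
      obtain ⟨r1, d1, lip1⟩ := ih i₂ b₂ hch2 x y hx hy hδx hδy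
      obtain ⟨r2, d2, _⟩ := ih i₂ b₂ hch2 y x hy hx hδy hδx
      set Q : (V →L[ℝ] V)ˣ := (((i₂, b₂) :: L').map letterU).prod with hQ
      have hnepair : (i, b) ≠ (i₂, !b₂) := by
        intro hh
        rw [Prod.mk.injEq] at hh
        refine hRr1 ⟨hh.1.symm, ?_⟩
        rw [hh.2]; simp
      have hsep2 := hsep i₂ b₂ i b hnepair
      have hδQ : ∀ z : Submodule ℝ V, Module.finrank ℝ (mapU Q z) = 1 →
          projDist (mapU Q z) (Submodule.span ℝ {v i₂ b₂}) ≤ ε →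
          ε ≤ projDelta (mapU Q z) (W i b) := by
        intro z hrz hdz
        have htri := Aux2.projDelta_le_dist_add (hWne i b)
          (x := Submodule.span ℝ {v i₂ b₂}) (z := mapU Q z) (hrankv i₂ b₂) hrz
        have hcm : projDist (Submodule.span ℝ {v i₂ b₂}) (mapU Q z)
            = projDist (mapU Q z) (Submodule.span ℝ {v i₂ b₂}) := Aux.projDist_comm _ _
        rw [hcm] at htri
        linarith
      have hδQx := hδQ x r1 d1
      have hδQy := hδQ y r2 d2
      have hprodeq : ((((i, b) :: (i₂, b₂) :: L').map letterU).prod) = letterU (i, b) * Q := by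
        rw [hQ, List.map_cons, List.prod_cons]
      rw [hprodeq, mapU_mul, mapU_mul]
      obtain ⟨hr, hd⟩ := hone i b (mapU Q x) r1 hδQx
      refine ⟨hr, hd, ?_⟩
      have hlip := honeLip i b (mapU Q x) (mapU Q y) r1 r2 hδQx hδQy
      have h5 : ε * projDist (mapU Q x) (mapU Q y) ≤ ε * (ε * projDist x y) :=
        mul_le_mul_of_nonneg_left lip1 hε.le
      have h6 : ε * (ε * projDist x y) ≤ ε * projDist x y := by
        nlinarith [mul_nonneg (by linarith : (0:ℝ) ≤ 1 - ε)
          (mul_nonneg hε.le (Aux.projDist_nonneg x y))]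
      linarith
  -- the quantitative estimate for nonempty reduced words
  set d₀ : ℝ := ε * (1 - ε) / 4 with hd₀
  have hd₀pos : 0 < d₀ := by rw [hd₀]; nlinarith
  have hd₀lt : d₀ < 1 := by rw [hd₀]; nlinarith
  have mainEst : ∀ (i : Fin t) (b : Bool) (L : List (Fin t × Bool)),
      List.Chain' Rr ((i, b) :: L) →
      d₀ ≤ ‖(((((i, b) :: L).map letterU).prod : (V →L[ℝ] V)ˣ) : V →L[ℝ] V) - 1‖ := by
    intro i b L hch
    by_contra hcon
    push_neg at hcon
    set P : (V →L[ℝ] V)ˣ := (((i, b) :: L).map letterU).prod with hPdef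
    set last : Fin t × Bool := L.getLastD (i, b) with hlast
    obtain ⟨j, hj⟩ : ∃ j : Fin t, j ≠ last.1 := by
      by_cases hc : last.1 = (⟨0, by omega⟩ : Fin t)
      · refine ⟨⟨1, by omega⟩, ?_⟩
        rw [hc]
        intro hh
        have := congrArg Fin.val hh
        simp at this
      · exact ⟨⟨0, by omega⟩, fun hh => hc hh.symm⟩
    set x₁ : Submodule ℝ V := Submodule.span ℝ {v j true} with hx₁
    set x₂ : Submodule ℝ V := Submodule.span ℝ {v j false} with hx₂
    have hsepx : ∀ c : Bool, (last.1, last.2) ≠ (j, !c) := by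
      intro c hh
      rw [Prod.mk.injEq] at hh
      exact hj hh.1.symm
    have hδ₁ : ε ≤ projDelta x₁ (W last.1 last.2) := by
      have := hsep j true last.1 last.2 (hsepx true)
      rw [← hx₁] at this
      linarith
    have hδ₂ : ε ≤ projDelta x₂ (W last.1 last.2) := by
      have := hsep j false last.1 last.2 (hsepx false)
      rw [← hx₂] at this
      linarith
    -- the attracting lines of γ j and (γ j)⁻¹ are 2ε-separated
    have hgg' : ∀ z : V, (↑(γ j) : V →L[ℝ] V) ((↑(γ j)⁻¹ : V →L[ℝ] V) z) = z := by
      intro z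
      rw [← ContinuousLinearMap.mul_apply, Units.mul_inv, ContinuousLinearMap.one_apply]
    have hg'g : ∀ z : V, (↑(γ j)⁻¹ : V →L[ℝ] V) ((↑(γ j) : V →L[ℝ] V) z) = z := by
      intro z
      rw [← ContinuousLinearMap.mul_apply, Units.inv_mul, ContinuousLinearMap.one_apply]
    have hvW : v j false ∈ W j true :=
      AuxS.attract_mem_repel hgg' hg'g (hprox j true).1 (hprox j false).1 (hWne j false)
    have hd12 : 2 * ε ≤ projDist x₁ x₂ := by
      have h1 := (hprox j true).2.1
      have h2 := Aux2.projDelta_le (x := x₁)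
        (Submodule.span_le.2 (Set.singleton_subset_iff.2 hvW)) (hrankv j false)
      rw [← hx₁] at h1
      linarith
    obtain ⟨r1, _, lip1⟩ := keyLemma L i b hch x₁ x₂ (hrankv j true) (hrankv j false) hδ₁ hδ₂
    obtain ⟨r2, _, _⟩ := keyLemma L i b hch x₂ x₁ (hrankv j false) (hrankv j true) hδ₂ hδ₁
    have hpert : ∀ z : Submodule ℝ V, Module.finrank ℝ z = 1 →
        projDist (mapU P z) z ≤ 2 * d₀ :=
      fun z hz => perturb_dist hd₀lt hcon.le hz
    have tri1 : projDist x₁ x₂ ≤ projDist x₁ (mapU P x₁) + projDist (mapU P x₁) x₂ :=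
      Aux.projDist_triangle (hrankv j true) r1 (hrankv j false)
    have tri2 : projDist (mapU P x₁) x₂ ≤ projDist (mapU P x₁) (mapU P x₂)
        + projDist (mapU P x₂) x₂ :=
      Aux.projDist_triangle r1 r2 (hrankv j false)
    have hpe1 : projDist x₁ (mapU P x₁) ≤ 2 * d₀ := by
      rw [Aux.projDist_comm]
      exact hpert x₁ (hrankv j true)
    have hpe2 : projDist (mapU P x₂) x₂ ≤ 2 * d₀ := hpert x₂ (hrankv j false)
    have hd12' : projDist x₁ x₂ ≤ 2 := Aux.projDist_le_two (hrankv j true) (hrankv j false)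
    have hfin : projDist x₁ x₂ ≤ 4 * d₀ + ε * projDist x₁ x₂ := by linarith
    rw [hd₀] at hfin
    nlinarith
  constructor
  · rw [injective_iff_map_eq_one]
    intro wrd hwrd
    by_contra hne
    have hL : wrd.toWord ≠ [] := fun h => hne (FreeGroup.toWord_eq_nil_iff.1 h)
    obtain ⟨⟨i, b⟩, L, hLeq⟩ := List.exists_cons_of_ne_nil hL
    have hch : List.Chain' Rr ((i, b) :: L) := by
      apply chain'_of_no_invpair
      intro L1 L2 xx bb hh
      exact FreeGroup.reduce.not (L₁ := wrd.toWord)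
        (by rw [FreeGroup.reduce_toWord, hLeq, hh])
    have hest := mainEst i b L hch
    have hlift : FreeGroup.lift γ wrd = (((i, b) :: L).map letterU).prod := by
      conv_lhs => rw [← FreeGroup.mk_toWord (x := wrd)]
      rw [FreeGroup.lift_mk, hLeq]
    rw [hwrd] at hlift
    rw [← hlift, Units.val_one, sub_self, norm_zero] at hest
    linarith
  · have gap : ∀ u : (V →L[ℝ] V)ˣ, u ∈ Subgroup.closure (Set.range γ) →
        ‖(u : V →L[ℝ] V) - 1‖ < d₀ → u = 1 := by
      intro u hu hlt
      have hmem : u ∈ (FreeGroup.lift γ).range := by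
        rw [FreeGroup.range_lift_eq_closure]; exact hu
      obtain ⟨wrd, rfl⟩ := hmem
      by_contra hne1
      have hwrd : wrd ≠ 1 := fun h => hne1 (by rw [h, map_one])
      have hL : wrd.toWord ≠ [] := fun h => hwrd (FreeGroup.toWord_eq_nil_iff.1 h)
      obtain ⟨⟨i, b⟩, L, hLeq⟩ := List.exists_cons_of_ne_nil hL
      have hch : List.Chain' Rr ((i, b) :: L) := by
        apply chain'_of_no_invpair
        intro L1 L2 xx bb hh
        exact FreeGroup.reduce.not (L₁ := wrd.toWord)
          (by rw [FreeGroup.reduce_toWord, hLeq, hh])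
      have hest := mainEst i b L hch
      have hlift : FreeGroup.lift γ wrd = (((i, b) :: L).map letterU).prod := by
        conv_lhs => rw [← FreeGroup.mk_toWord (x := wrd)]
        rw [FreeGroup.lift_mk, hLeq]
      rw [← hlift] at hest
      linarith
    apply discreteTopology_iff_isOpen_singleton.mpr
    intro a
    set f : (Subgroup.closure (Set.range γ) : Subgroup (V →L[ℝ] V)ˣ) → (V →L[ℝ] V) :=
      fun s => ((s : (V →L[ℝ] V)ˣ) : V →L[ℝ] V) with hf
    have hfc : Continuous f := Units.continuous_val.comp continuous_subtype_val
    set aI : V →L[ℝ] V := (((a : (V →L[ℝ] V)ˣ)⁻¹ : (V →L[ℝ] V)ˣ) : V →L[ℝ] V) with haI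
    have hIa0 : 0 < ‖aI‖ := by
      rcases (norm_nonneg aI).lt_or_eq with h | h
      · exact h
      · exfalso
        have h1 : aI * f a = 1 := by
          rw [hf, haI, ← Units.val_mul, inv_mul_cancel, Units.val_one]
        have h2 : (1 : ℝ) = ‖(1 : V →L[ℝ] V)‖ := by
          rw [ContinuousLinearMap.one_def, ContinuousLinearMap.norm_id]
        have h3 : ‖aI * f a‖ ≤ ‖aI‖ * ‖f a‖ := norm_mul_le _ _
        rw [h1, ← h, zero_mul] at h3
        linarith
    set r : ℝ := d₀ / ‖aI‖ with hr
    have hrpos : 0 < r := by rw [hr]; positivity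
    have hset : {a} = f ⁻¹' (Metric.ball (f a) r) := by
      ext s
      simp only [Set.mem_singleton_iff, Set.mem_preimage, Metric.mem_ball, dist_eq_norm]
      constructor
      · rintro rfl
        rw [sub_self, norm_zero]; exact hrpos
      · intro hlt
        have hg : ((s : (V →L[ℝ] V)ˣ) * (a : (V →L[ℝ] V)ˣ)⁻¹) ∈
            Subgroup.closure (Set.range γ) :=
          mul_mem s.2 (inv_mem a.2)
        have hnorm : ‖((((s : (V →L[ℝ] V)ˣ) * (a : (V →L[ℝ] V)ˣ)⁻¹ : (V →L[ℝ] V)ˣ))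
            : V →L[ℝ] V) - 1‖ < d₀ := by
          have he : ((((s : (V →L[ℝ] V)ˣ) * (a : (V →L[ℝ] V)ˣ)⁻¹ : (V →L[ℝ] V)ˣ))
              : V →L[ℝ] V) - 1 = (f s - f a) * aI := by
            rw [Units.val_mul, sub_mul, hf, haI]
            congr 1
            rw [← Units.val_mul, mul_inv_cancel, Units.val_one]
          rw [he]
          calc ‖(f s - f a) * aI‖ ≤ ‖f s - f a‖ * ‖aI‖ := norm_mul_le _ _
            _ < r * ‖aI‖ := mul_lt_mul_of_pos_right hlt hIa0
            _ = d₀ := by rw [hr]; field_simp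
        have := gap _ hg hnorm
        have h9 : (s : (V →L[ℝ] V)ˣ) = (a : (V →L[ℝ] V)ˣ) := by
          rw [← mul_inv_eq_one]; exact this
        exact Subtype.ext h9
    rw [hset]
    exact hfc.isOpen_preimage _ Metric.isOpen_ball
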